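/- Let m, n, d be natural numbers with 0 < d < min(m,n), c = m+n-2d-1, and set p(m) = (-1)^(d(d-1)/2)·∏_{i=1}^{d} ((i-1)!(c+i-1)!)/((m-i-1)!(n-i)!) (a function of m with n, d fixed, so that incrementing m also increments c). Then ∑_{j=0}^{d} C(d,j)·C(n-d+j-1,j)/C(m-1,j) · p(m) = p(m+1), i.e., (∑_{j=0}^{d} C(d,j)·C(n-d+j-1,j)/C(m-1,j)) · ∏_{i=1}^{d} (c+i-1)!/(m-i-1)! = ∏_{i=1}^{d} (c+i)!/(m-i)!. -/

import Mathlib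

open Finset

/-- Vandermonde-type identity for upper indices. -/
lemma vand_aux (r : ℕ) : ∀ s k : ℕ,
    ∑ j ∈ Finset.range (k + 1), (r + j).choose j * (s + (k - j)).choose (k - j)
      = (r + s + k + 1).choose k := by
  intro s
  induction s with
  | zero =>
    intro k
    have h1 : ∀ j ∈ Finset.range (k + 1),
        (r + j).choose j * (0 + (k - j)).choose (k - j) = (j + r).choose r := by
      intro j hj
      have : (j + r).choose r = (j + r).choose j := by
        rw [← Nat.choose_symm (Nat.le_add_left r j)]
        congr 1
        omega
      rw [Nat.zero_add, Nat.choose_self, Nat.mul_one, this, Nat.add_comm j r]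
    rw [Finset.sum_congr rfl h1, Nat.sum_range_add_choose k r]
    rw [← Nat.choose_symm (show r + 1 ≤ k + r + 1 by omega)]
    congr 1 <;> omega
  | succ s ih =>
    intro k
    induction k with
    | zero => simp
    | succ k ihk =>
      have hsplit : ∀ j ∈ Finset.range (k + 1),
          (r + j).choose j * ((s + 1) + ((k + 1) - j)).choose ((k + 1) - j)
            = (r + j).choose j * ((s + 1) + (k - j)).choose (k - j)
              + (r + j).choose j * (s + ((k + 1) - j)).choose ((k + 1) - j) := by
        intro j hj
        rw [Finset.mem_range] at hj
        have h1 : (k + 1) - j = (k - j) + 1 := by omega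
        have h2 : (s + 1) + ((k - j) + 1) = ((s + 1) + (k - j)) + 1 := by omega
        have h3 : s + ((k - j) + 1) = (s + 1) + (k - j) := by omega
        rw [h1, h2, Nat.choose_succ_succ, Nat.mul_add, h3]
      have h2sum := ih (k + 1)
      rw [Finset.sum_range_succ] at h2sum
      rw [Finset.sum_range_succ, Finset.sum_congr rfl hsplit, Finset.sum_add_distrib, ihk]
      simp only [Nat.sub_self, Nat.choose_zero_right, Nat.mul_one] at h2sum ⊢
      have hp : (r + (s + 1) + (k + 1) + 1).choose (k + 1)
          = (r + s + (k + 1) + 1).choose k + (r + s + (k + 1) + 1).choose (k + 1) := by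
        have : r + (s + 1) + (k + 1) + 1 = (r + s + (k + 1) + 1) + 1 := by omega
        rw [this, Nat.choose_succ_succ]
      rw [hp]
      have he : r + (s + 1) + k + 1 = r + s + (k + 1) + 1 := by omega
      rw [he]
      omega

/-- The combinatorial identity combining `q_j = (C(d,j)C(n-d+j-1,j)/C(m-1,j))·q_0(m,n,d)`
and `∑_j q_j(m,n,d) = q_0(m+1,n,d)`: with `c = m+n-2d-1`,
`(∑_j C(d,j)C(n-d+j-1,j)/C(m-1,j)) · ∏_{i=1}^d (c+i-1)!/(m-i-1)! = ∏_{i=1}^d (c+i)!/(m-i)!`. -/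
theorem sum_k_j_identity (m n d : ℕ) (hd : 0 < d) (hdm : d < m) (hdn : d < n) :
    (∑ j ∈ Finset.range (d + 1),
        (d.choose j : ℚ) * ((n - d + j - 1).choose j : ℚ) / ((m - 1).choose j : ℚ)) *
      ∏ i ∈ Finset.range d,
        ((m + n - 2 * d - 1 + i).factorial : ℚ) / ((m - i - 2).factorial : ℚ) =
    ∏ i ∈ Finset.range d,
      ((m + n - 2 * d - 1 + i + 1).factorial : ℚ) / ((m - i - 1).factorial : ℚ) := by
  set c := m + n - 2 * d - 1 with hc
  -- Step A: the sum equals C(c+d, d) / C(m-1, d)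
  have hmd : d ≤ m - 1 := by omega
  have hcd : c + d = m + n - d - 1 := by omega
  have hchoose_ne : ((m - 1).choose d : ℚ) ≠ 0 := by
    exact_mod_cast (Nat.choose_pos hmd).ne'
  have hsum : (∑ j ∈ Finset.range (d + 1),
      (d.choose j : ℚ) * ((n - d + j - 1).choose j : ℚ) / ((m - 1).choose j : ℚ))
        = ((c + d).choose d : ℚ) / ((m - 1).choose d : ℚ) := by
    have hnat : ∑ j ∈ Finset.range (d + 1), (n - d + j - 1).choose j * (m - 1 - j).choose (d - j)
        = (c + d).choose d := by
      have hv := vand_aux (n - d - 1) (m - 1 - d) d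
      have hi : c + d = n - d - 1 + (m - 1 - d) + d + 1 := by omega
      rw [hi, ← hv]
      apply Finset.sum_congr rfl
      intro j hj
      rw [Finset.mem_range] at hj
      have h1 : n - d + j - 1 = n - d - 1 + j := by omega
      have h2 : m - 1 - j = m - 1 - d + (d - j) := by omega
      rw [h1, h2]
    -- now convert to the rational statement
    rw [eq_div_iff hchoose_ne, Finset.sum_mul]
    have hterm : ∀ j ∈ Finset.range (d + 1),
        (d.choose j : ℚ) * ((n - d + j - 1).choose j : ℚ) / ((m - 1).choose j : ℚ)
            * ((m - 1).choose d : ℚ)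
          = (((n - d + j - 1).choose j * (m - 1 - j).choose (d - j) : ℕ) : ℚ) := by
      intro j hj
      rw [Finset.mem_range] at hj
      have hj' : j ≤ d := by omega
      have hcm := Nat.choose_mul (n := m - 1) hj'
      have hne : ((m - 1).choose j : ℚ) ≠ 0 := by
        exact_mod_cast (Nat.choose_pos (by omega : j ≤ m - 1)).ne'
      have hcmq := congrArg (fun x : ℕ => (x : ℚ)) hcm
      push_cast at hcmq
      field_simp
      push_cast
      linear_combination (((n - d + j - 1).choose j : ℚ)) * hcmq
    rw [Finset.sum_congr rfl hterm, ← Nat.cast_sum, hnat]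
  -- Step B: the ratio of products
  have hprod : (∏ i ∈ Finset.range d, ((c + i + 1).factorial : ℚ) / ((m - i - 1).factorial : ℚ))
      = (∏ i ∈ Finset.range d, ((c + i).factorial : ℚ) / ((m - i - 2).factorial : ℚ))
        * (((c + d).choose d : ℚ) / ((m - 1).choose d : ℚ)) := by
    have hratio : (∏ i ∈ Finset.range d, ((c + i + 1 : ℕ) : ℚ) / ((m - i - 1 : ℕ) : ℚ))
        = ((c + d).choose d : ℚ) / ((m - 1).choose d : ℚ) := by
      have hn1 : ∏ i ∈ Finset.range d, (c + i + 1) = (c + d).descFactorial d := by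
        rw [Nat.descFactorial_eq_prod_range]
        rw [← Finset.prod_range_reflect (fun i => c + i + 1) d]
        apply Finset.prod_congr rfl
        intro i hi
        rw [Finset.mem_range] at hi
        omega
      have hn2 : ∏ i ∈ Finset.range d, (m - i - 1) = (m - 1).descFactorial d := by
        rw [Nat.descFactorial_eq_prod_range]
        apply Finset.prod_congr rfl
        intro i hi
        rw [Finset.mem_range] at hi
        omega
      rw [Finset.prod_div_distrib, ← Nat.cast_prod, ← Nat.cast_prod, hn1, hn2,
        Nat.descFactorial_eq_factorial_mul_choose, Nat.descFactorial_eq_factorial_mul_choose]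
      push_cast
      rw [mul_div_mul_left]
      exact_mod_cast (Nat.factorial_pos d).ne'
    rw [← hratio, ← Finset.prod_mul_distrib]
    apply Finset.prod_congr rfl
    intro i hi
    rw [Finset.mem_range] at hi
    have hf1 : (c + i + 1).factorial = (c + i + 1) * (c + i).factorial := Nat.factorial_succ _
    have hf2 : (m - i - 1).factorial = (m - i - 1) * (m - i - 2).factorial := by
      have : m - i - 1 = (m - i - 2) + 1 := by omega
      rw [this, Nat.factorial_succ]
    have hne1 : ((m - i - 2).factorial : ℚ) ≠ 0 := by exact_mod_cast (Nat.factorial_pos _).ne'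
    have hne2 : ((m - i - 1 : ℕ) : ℚ) ≠ 0 := by
      have : 0 < m - i - 1 := by omega
      exact_mod_cast this.ne'
    rw [hf1, hf2]
    push_cast
    field_simp
    try ring
  -- Assemble
  have hcongr1 : ∀ i ∈ Finset.range d, ((c + i + 1).factorial : ℚ) / ((m - i - 1).factorial : ℚ)
      = ((m + n - 2 * d - 1 + i + 1).factorial : ℚ) / ((m - i - 1).factorial : ℚ) := by
    intro i _
    rw [← hc]
  rw [← Finset.prod_congr rfl hcongr1, hprod, hsum]
  ring
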